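/- Purification of Lagrangian relations: Let k be a field, n, m natural numbers, and let L ≤ (k^n ⊕ k^n) × (k^m ⊕ k^m) be a Lagrangian relation, i.e. a subspace that is Lagrangian with respect to the relation form Ω_{n,m}(((x,z),(y,w)),((x',z'),(y',w'))) = ω_m((y,w),(y',w')) − ω_n((x,z),(x',z')). Then there exist a natural number r, a linear subspace V ≤ k^n × (k^m × k^r), and scalars a : Fin r → k such that L = {((x,z),(y,w)) : ∃ u, u' ∈ k^r, (x,(y,u)) ∈ V ∧ (z,(w,u')) ∈ V^⊥ ∧ ∀ i, u'ᵢ = aᵢ · uᵢ}, where V^⊥ = {(b,(c,v)) : ⟨b,x⟩ = ⟨c,y⟩ + ⟨v,u⟩ for all (x,(y,u)) ∈ V} is the covariant orthogonal complement of V regarded as a linear relation from k^n to k^m × k^r. In other words, every Lagrangian relation is the relational composite of a doubled (pure) linear relation with discard relations d_{aᵢ} = {(u, aᵢ·u) : u ∈ k} on the extra doubled wires. -/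

import Mathlib

namespace Statement16

variable {k : Type*} [Field k]

/-- Dot product on `k^n`. -/
def dot {n : ℕ} (x y : Fin n → k) : k := ∑ i, x i * y i

/-- The standard symplectic form on `k^n ⊕ k^n`:
`ω((x,z),(x',z')) = ⟨x,z'⟩ − ⟨z,x'⟩`. -/
def sf {n : ℕ} (v w : (Fin n → k) × (Fin n → k)) : k :=
  dot v.1 w.2 - dot v.2 w.1

lemma dot_comm {n : ℕ} (x y : Fin n → k) : dot x y = dot y x := by
  simp [dot, mul_comm]

lemma dot_add_right {n : ℕ} (x y z : Fin n → k) : dot x (y + z) = dot x y + dot x z := by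
  simp [dot, mul_add, Finset.sum_add_distrib]

lemma dot_smul_right {n : ℕ} (c : k) (x y : Fin n → k) : dot x (c • y) = c * dot x y := by
  simp only [dot, Pi.smul_apply, smul_eq_mul, Finset.mul_sum]
  exact Finset.sum_congr rfl fun i _ => by ring

lemma dot_zero_right {n : ℕ} (x : Fin n → k) : dot x 0 = 0 := by simp [dot]

lemma dot_sum_right {n : ℕ} {ι : Type*} (s : Finset ι) (x : Fin n → k) (f : ι → Fin n → k) :
    dot x (∑ j ∈ s, f j) = ∑ j ∈ s, dot x (f j) := by
  simp [dot, Finset.mul_sum]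
  exact Finset.sum_comm

lemma dot_sub_right {n : ℕ} (x y z : Fin n → k) : dot x (y - z) = dot x y - dot x z := by
  simp [dot, mul_sub, Finset.sum_sub_distrib]

/-- The pairing on `k^n × k^m`. -/
def bp {n m : ℕ} (X Z : (Fin n → k) × (Fin m → k)) : k :=
  dot X.2 Z.2 - dot X.1 Z.1

lemma bp_zero_left {n m : ℕ} (Z : (Fin n → k) × (Fin m → k)) : bp 0 Z = 0 := by
  simp [bp, dot]

lemma dot_smul_left {n : ℕ} (c : k) (x y : Fin n → k) : dot (c • x) y = c * dot x y := by
  rw [dot_comm, dot_smul_right, dot_comm]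

lemma dot_add_left {n : ℕ} (x y z : Fin n → k) : dot (x + y) z = dot x z + dot y z := by
  rw [dot_comm, dot_add_right, dot_comm z, dot_comm z]

lemma bp_smul_left {n m : ℕ} (c : k) (X Z : (Fin n → k) × (Fin m → k)) :
    bp (c • X) Z = c * bp X Z := by
  simp only [bp, Prod.smul_fst, Prod.smul_snd, dot_smul_left]
  ring

lemma bp_add_left {n m : ℕ} (X Y Z : (Fin n → k) × (Fin m → k)) :
    bp (X + Y) Z = bp X Z + bp Y Z := by
  simp only [bp, Prod.fst_add, Prod.snd_add, dot_add_left]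
  ring

lemma bp_sum_left {n m : ℕ} {ι : Type*} (s : Finset ι) (f : ι → (Fin n → k) × (Fin m → k))
    (Z : (Fin n → k) × (Fin m → k)) :
    bp (∑ j ∈ s, f j) Z = ∑ j ∈ s, bp (f j) Z := by
  classical
  induction s using Finset.induction_on with
  | empty => simp [bp_zero_left]
  | @insert a t ha ih => rw [Finset.sum_insert ha, Finset.sum_insert ha, bp_add_left, ih]

lemma bp_smul_right {n m : ℕ} (c : k) (X Z : (Fin n → k) × (Fin m → k)) :
    bp X (c • Z) = c * bp X Z := by
  simp only [bp, Prod.smul_fst, Prod.smul_snd]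
  rw [dot_smul_right, dot_smul_right]
  ring

lemma bp_zero_right {n m : ℕ} (X : (Fin n → k) × (Fin m → k)) : bp X 0 = 0 := by
  simp [bp, dot]

lemma bp_add_right {n m : ℕ} (X Z W : (Fin n → k) × (Fin m → k)) :
    bp X (Z + W) = bp X Z + bp X W := by
  simp only [bp, Prod.fst_add, Prod.snd_add, dot_add_right]; ring

lemma bp_sub_right {n m : ℕ} (X Z W : (Fin n → k) × (Fin m → k)) :
    bp X (Z - W) = bp X Z - bp X W := by
  simp only [bp, Prod.fst_sub, Prod.snd_sub, dot_sub_right]; ring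

lemma bp_sum_right {n m : ℕ} {ι : Type*} (s : Finset ι) (X : (Fin n → k) × (Fin m → k))
    (f : ι → (Fin n → k) × (Fin m → k)) :
    bp X (∑ j ∈ s, f j) = ∑ j ∈ s, bp X (f j) := by
  classical
  induction s using Finset.induction_on with
  | empty => simp [bp_zero_right]
  | @insert a t ha ih => rw [Finset.sum_insert ha, Finset.sum_insert ha, bp_add_right, ih]

/-- Projection to the "covariant" part. -/
def piX (k : Type*) [Field k] (n m : ℕ) :
    (((Fin n → k) × (Fin n → k)) × ((Fin m → k) × (Fin m → k))) →ₗ[k]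
      ((Fin n → k) × (Fin m → k)) :=
  ((LinearMap.fst k (Fin n → k) (Fin n → k)).comp
      (LinearMap.fst k ((Fin n → k) × (Fin n → k)) ((Fin m → k) × (Fin m → k)))).prod
    ((LinearMap.fst k (Fin m → k) (Fin m → k)).comp
      (LinearMap.snd k ((Fin n → k) × (Fin n → k)) ((Fin m → k) × (Fin m → k))))

@[simp] lemma piX_apply {n m : ℕ}
    (p : ((Fin n → k) × (Fin n → k)) × ((Fin m → k) × (Fin m → k))) :
    piX k n m p = (p.1.1, p.2.1) := rfl

/-- Projection to the "contravariant" part. -/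
def piZ (k : Type*) [Field k] (n m : ℕ) :
    (((Fin n → k) × (Fin n → k)) × ((Fin m → k) × (Fin m → k))) →ₗ[k]
      ((Fin n → k) × (Fin m → k)) :=
  ((LinearMap.snd k (Fin n → k) (Fin n → k)).comp
      (LinearMap.fst k ((Fin n → k) × (Fin n → k)) ((Fin m → k) × (Fin m → k)))).prod
    ((LinearMap.snd k (Fin m → k) (Fin m → k)).comp
      (LinearMap.snd k ((Fin n → k) × (Fin n → k)) ((Fin m → k) × (Fin m → k))))

@[simp] lemma piZ_apply {n m : ℕ}
    (p : ((Fin n → k) × (Fin n → k)) × ((Fin m → k) × (Fin m → k))) :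
    piZ k n m p = (p.1.2, p.2.2) := rfl
/-- Off-diagonal folding lemma. -/
lemma offdiag_sum {d : ℕ} (M : Fin d → Fin d → k) (hM : ∀ i j, M i j = M j i)
    (φ : Fin d → Fin d → k) :
    ∑ i, ∑ j, (if i < j then M i j else 0) * (φ i j + φ j i)
      = ∑ i, ∑ j, M i j * φ i j - ∑ i, M i i * φ i i := by
  have h2 : ∑ i, ∑ j, (if i < j then M i j else 0) * φ j i
      = ∑ i, ∑ j, (if j < i then M i j else 0) * φ i j := by
    rw [Finset.sum_comm]
    exact Finset.sum_congr rfl fun i _ => Finset.sum_congr rfl fun j _ => by rw [hM i j]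
  have h3 : ∀ i j : Fin d, (if i < j then M i j else 0) * φ i j
      + (if j < i then M i j else 0) * φ i j
      = M i j * φ i j - (if i = j then M i i * φ i i else 0) := by
    intro i j
    rcases lt_trichotomy i j with h | h | h
    · simp [h, not_lt.mpr h.le, h.ne]
    · simp [h]
    · simp [h, not_lt.mpr h.le, h.ne']
  calc ∑ i, ∑ j, (if i < j then M i j else 0) * (φ i j + φ j i)
      = (∑ i, ∑ j, (if i < j then M i j else 0) * φ i j)
        + ∑ i, ∑ j, (if i < j then M i j else 0) * φ j i := by
        simp_rw [mul_add, Finset.sum_add_distrib]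
    _ = ∑ i, ∑ j, ((if i < j then M i j else 0) * φ i j
          + (if j < i then M i j else 0) * φ i j) := by
        rw [h2]; simp_rw [Finset.sum_add_distrib]
    _ = ∑ i, ∑ j, (M i j * φ i j - (if i = j then M i i * φ i i else 0)) := by
        simp_rw [h3]
    _ = ∑ i, ∑ j, M i j * φ i j - ∑ i, M i i * φ i i := by
        simp_rw [Finset.sum_sub_distrib]
        congr 1
        exact Finset.sum_congr rfl fun i _ => by simp


/-- The linear functional attached to the pair `ij`. -/
def F' {d : ℕ} (ij : Fin d × Fin d) (c : Fin d → k) : k :=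
  if ij.1 = ij.2 then c ij.1 else if ij.1 < ij.2 then c ij.1 + c ij.2 else 0

/-- The scalar attached to the pair `ij`. -/
def A' {d : ℕ} (H : Fin d → Fin d → k) (ij : Fin d × Fin d) : k :=
  if ij.1 = ij.2 then 2 * H ij.1 ij.1 - ∑ l, H ij.1 l
  else if ij.1 < ij.2 then H ij.1 ij.2 else 0

lemma key {d : ℕ} (H : Fin d → Fin d → k) (hH : ∀ i j, H i j = H j i) (c c' : Fin d → k) :
    ∑ ij : Fin d × Fin d, A' H ij * (F' ij c * F' ij c')
      = ∑ i, ∑ j, H i j * (c i * c' j) := by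
  rw [Fintype.sum_prod_type]
  have hpt : ∀ i j : Fin d, A' H (i, j) * (F' (i, j) c * F' (i, j) c')
      = (if i = j then (2 * H i i - ∑ l, H i l) * (c i * c' i) else 0)
        + ((if i < j then H i j else 0) * ((c i * c' j + c j * c' i)
            + (c i * c' i + c j * c' j))) := by
    intro i j
    rcases lt_trichotomy i j with h | h | h
    · simp only [A', F', if_neg h.ne, if_pos h]
      ring
    · subst h
      show A' H (i, i) * _ = _
      have e1 : A' H (i, i) = 2 * H i i - ∑ l, H i l := if_pos rfl
      have e2 : F' (i, i) c = c i := if_pos rfl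
      have e3 : F' (i, i) c' = c' i := if_pos rfl
      rw [e1, e2, e3, if_neg (lt_irrefl i), if_pos rfl]
      ring
    · simp [A', F', h.ne', not_lt.mpr h.le]
  simp_rw [hpt]
  rw [Finset.sum_congr rfl fun i (_ : i ∈ Finset.univ) => Finset.sum_add_distrib,
    Finset.sum_add_distrib]
  have hdiag : ∑ i, ∑ j, (if i = j then (2 * H i i - ∑ l, H i l) * (c i * c' i) else 0)
      = ∑ i, (2 * H i i - ∑ l, H i l) * (c i * c' i) := by
    exact Finset.sum_congr rfl fun i _ => by simp
  have hsplit : ∀ i j : Fin d, ((if i < j then H i j else 0) * ((c i * c' j + c j * c' i)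
        + (c i * c' i + c j * c' j)))
      = (if i < j then H i j else 0) * (c i * c' j + c j * c' i)
        + (if i < j then H i j else 0) * (c i * c' i + c j * c' j) :=
    fun i j => mul_add _ _ _
  have hoff : ∑ i, ∑ j, ((if i < j then H i j else 0) * ((c i * c' j + c j * c' i)
        + (c i * c' i + c j * c' j)))
      = (∑ i, ∑ j, H i j * (c i * c' j) - ∑ i, H i i * (c i * c' i))
        + (∑ i, ∑ j, H i j * (c i * c' i) - ∑ i, H i i * (c i * c' i)) := by
    simp_rw [hsplit, Finset.sum_add_distrib]
    rw [offdiag_sum H hH (fun i j => c i * c' j),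
      offdiag_sum H hH (fun i j => c i * c' i)]
  rw [hdiag, hoff]
  have hrow : ∑ i, ∑ j, H i j * (c i * c' i) = ∑ i, (∑ l, H i l) * (c i * c' i) :=
    Finset.sum_congr rfl fun i _ => by rw [← Finset.sum_mul]
  rw [hrow]
  have collect : ∑ i, (2 * H i i - ∑ l, H i l) * (c i * c' i)
      + ((∑ i, (∑ l, H i l) * (c i * c' i) - ∑ i, H i i * (c i * c' i))
         - ∑ i, H i i * (c i * c' i)) = 0 := by
    rw [← Finset.sum_sub_distrib, ← Finset.sum_sub_distrib, ← Finset.sum_add_distrib]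
    exact Finset.sum_eq_zero fun i _ => by ring
  linear_combination collect


lemma F'_zero {d : ℕ} (ij : Fin d × Fin d) : F' ij (0 : Fin d → k) = 0 := by
  unfold F'; split_ifs <;> simp

lemma F'_add {d : ℕ} (ij : Fin d × Fin d) (c c' : Fin d → k) :
    F' ij (c + c') = F' ij c + F' ij c' := by
  unfold F'; split_ifs <;> simp <;> ring

lemma F'_smul {d : ℕ} (s : k) (ij : Fin d × Fin d) (c : Fin d → k) :
    F' ij (s • c) = s * F' ij c := by
  unfold F'; split_ifs <;> simp <;> ring

lemma swap_sum {d : ℕ} (H : Fin d → Fin d → k) (hH : ∀ i j, H i j = H j i) (c c' : Fin d → k) :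
    ∑ i, ∑ j, H i j * (c i * c' j) = ∑ i, ∑ j, H i j * (c' i * c j) := by
  rw [Finset.sum_comm]
  exact Finset.sum_congr rfl fun i _ => Finset.sum_congr rfl fun j _ => by rw [hH]; ring

theorem statement16 (n m : ℕ)
    (L : Submodule k (((Fin n → k) × (Fin n → k)) × ((Fin m → k) × (Fin m → k))))
    (hL : ∀ p : ((Fin n → k) × (Fin n → k)) × ((Fin m → k) × (Fin m → k)),
        p ∈ L ↔ ∀ q ∈ L, sf p.2 q.2 - sf p.1 q.1 = 0) :
    ∃ (r : ℕ) (V : Submodule k ((Fin n → k) × ((Fin m → k) × (Fin r → k))))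
      (a : Fin r → k),
      ∀ p : ((Fin n → k) × (Fin n → k)) × ((Fin m → k) × (Fin m → k)),
        p ∈ L ↔ ∃ u u' : Fin r → k,
          (p.1.1, (p.2.1, u)) ∈ V ∧
          (∀ q ∈ V, dot p.1.2 q.1 = dot p.2.2 q.2.1 + dot u' q.2.2) ∧
          ∀ i : Fin r, u' i = a i * u i := by
  classical
  -- the projection of L
  let P : Submodule k ((Fin n → k) × (Fin m → k)) := L.map (piX k n m)
  let d := Module.finrank k ↥P
  let b : Module.Basis (Fin d) k ↥P := Module.finBasis k ↥P
  have hlift : ∀ i : Fin d, ∃ p, p ∈ L ∧ piX k n m p = ((b i : ↥P) : (Fin n → k) × (Fin m → k)) :=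
    fun i => Submodule.mem_map.mp (b i).2
  choose ℓ hℓL hℓX using hlift
  -- symmetry of the relation form on L
  have hΩ : ∀ p ∈ L, ∀ q ∈ L,
      bp (piX k n m p) (piZ k n m q) = bp (piX k n m q) (piZ k n m p) := by
    intro p hp q hq
    have h0 := (hL p).mp hp q hq
    simp only [sf, bp, piX_apply, piZ_apply] at h0 ⊢
    rw [dot_comm q.2.1 p.2.2, dot_comm q.1.1 p.1.2]
    linear_combination h0
  -- elements with zero covariant part orthogonal to P lie in L
  have hzero : ∀ D : (Fin n → k) × (Fin m → k),
      (∀ q ∈ L, bp (piX k n m q) D = 0) → ((0, D.1), (0, D.2)) ∈ L := by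
    intro D hD
    apply (hL _).mpr
    intro q hq
    have h0 := hD q hq
    simp only [bp, piX_apply] at h0
    show dot 0 q.2.2 - dot D.2 q.2.1 - (dot 0 q.1.2 - dot D.1 q.1.1) = 0
    rw [dot_comm (0 : Fin m → k) q.2.2, dot_zero_right, dot_comm (0 : Fin n → k) q.1.2,
      dot_zero_right, dot_comm D.2 q.2.1, dot_comm D.1 q.1.1]
    linear_combination -h0
  -- the Gram matrix
  let G : Fin d → Fin d → k :=
    fun i j => bp ((b i : ↥P) : (Fin n → k) × (Fin m → k)) (piZ k n m (ℓ j))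
  have hGsym : ∀ i j, G i j = G j i := by
    intro i j
    show bp _ _ = bp _ _
    rw [← hℓX i, ← hℓX j]
    exact hΩ (ℓ i) (hℓL i) (ℓ j) (hℓL j)
  -- canonical lifts
  have hq_mem : ∀ X : ↥P, (∑ j, (b.repr X) j • ℓ j) ∈ L :=
    fun X => Submodule.sum_mem _ fun j _ => Submodule.smul_mem _ _ (hℓL j)
  have hq_piX : ∀ X : ↥P, piX k n m (∑ j, (b.repr X) j • ℓ j) = X.val := by
    intro X
    rw [map_sum]
    calc ∑ j, piX k n m ((b.repr X) j • ℓ j)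
        = ∑ j, (b.repr X) j • ((b j : ↥P) : (Fin n → k) × (Fin m → k)) := by
          exact Finset.sum_congr rfl fun j _ => by rw [map_smul, hℓX]
      _ = P.subtype (∑ j, (b.repr X) j • b j) := by
          rw [map_sum]; exact (Finset.sum_congr rfl fun j _ => by rw [map_smul]; rfl).symm
      _ = X.val := by rw [b.sum_repr X]; rfl
  have hbpq : ∀ (X : ↥P) (Y : (Fin n → k) × (Fin m → k)),
      bp Y (piZ k n m (∑ j, (b.repr X) j • ℓ j)) = ∑ j, (b.repr X) j * bp Y (piZ k n m (ℓ j)) := by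
    intro X Y
    rw [map_sum, bp_sum_right]
    exact Finset.sum_congr rfl fun j _ => by rw [map_smul, bp_smul_right]
  have hbp_left : ∀ (X : ↥P) (D : (Fin n → k) × (Fin m → k)),
      bp X.val D = ∑ i, (b.repr X) i * bp ((b i : ↥P) : (Fin n → k) × (Fin m → k)) D := by
    intro X D
    conv_lhs => rw [show X.val = P.subtype X from rfl, ← b.sum_repr X, map_sum]
    rw [bp_sum_left]
    exact Finset.sum_congr rfl fun i _ => by
      rw [show P.subtype ((b.repr X) i • b i) = (b.repr X) i • P.subtype (b i) from map_smul _ _ _,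
        bp_smul_left]
      rfl
  -- membership characterization, forward
  have hchar1 : ∀ p ∈ L, ∀ (hp : piX k n m p ∈ P) (i : Fin d),
      bp ((b i : ↥P) : (Fin n → k) × (Fin m → k)) (piZ k n m p)
        = ∑ j, (b.repr ⟨piX k n m p, hp⟩) j * G i j := by
    intro p hp hpP i
    set X : ↥P := ⟨piX k n m p, hpP⟩ with hX
    have hsub : (p - ∑ j, (b.repr X) j • ℓ j) ∈ L := L.sub_mem hp (hq_mem X)
    have hpx0 : piX k n m (p - ∑ j, (b.repr X) j • ℓ j) = 0 := by
      rw [map_sub, hq_piX X]; show piX k n m p - piX k n m p = 0; rw [sub_self]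
    have h1 : bp ((b i : ↥P) : (Fin n → k) × (Fin m → k))
        (piZ k n m (p - ∑ j, (b.repr X) j • ℓ j)) = 0 := by
      rw [← hℓX i, hΩ (ℓ i) (hℓL i) _ hsub, hpx0, bp_zero_left]
    rw [map_sub, bp_sub_right, hbpq X, sub_eq_zero] at h1
    exact h1
  -- membership characterization, backward
  have hchar2 : ∀ p, ∀ (hp : piX k n m p ∈ P),
      (∀ i : Fin d, bp ((b i : ↥P) : (Fin n → k) × (Fin m → k)) (piZ k n m p)
        = ∑ j, (b.repr ⟨piX k n m p, hp⟩) j * G i j) → p ∈ L := by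
    intro p hpP hβ
    set X : ↥P := ⟨piX k n m p, hpP⟩ with hX
    set q := ∑ j, (b.repr X) j • ℓ j with hq
    set D : (Fin n → k) × (Fin m → k) := piZ k n m p - piZ k n m q with hD
    have hDi : ∀ i : Fin d, bp ((b i : ↥P) : (Fin n → k) × (Fin m → k)) D = 0 := by
      intro i
      rw [hD, bp_sub_right, hbpq X, hβ i, sub_eq_zero]
    have hDX : ∀ Y : ↥P, bp Y.val D = 0 := by
      intro Y
      rw [hbp_left Y D]
      exact Finset.sum_eq_zero fun i _ => by rw [hDi i, mul_zero]
    have hDL : ∀ q' ∈ L, bp (piX k n m q') D = 0 := by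
      intro q' hq'
      exact hDX ⟨piX k n m q', Submodule.mem_map_of_mem hq'⟩
    have hp0 : ((0, D.1), (0, D.2)) ∈ L := hzero D hDL
    have hpeq : p = q + ((0, D.1), (0, D.2)) := by
      have h1 : piX k n m q = piX k n m p := by rw [hq_piX X]
      simp only [piX_apply, Prod.mk.injEq] at h1
      obtain ⟨e1, e2⟩ := h1
      have f1 : D.1 = p.1.2 - q.1.2 := rfl
      have f2 : D.2 = p.2.2 - q.2.2 := rfl
      refine Prod.ext (Prod.ext ?_ ?_) (Prod.ext ?_ ?_)
      · show p.1.1 = q.1.1 + 0; rw [e1, add_zero]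
      · show p.1.2 = q.1.2 + D.1; rw [f1]; ring
      · show p.2.1 = q.2.1 + 0; rw [e2, add_zero]
      · show p.2.2 = q.2.2 + D.2; rw [f2]; ring
    rw [hpeq]
    exact L.add_mem (hq_mem X) hp0
  -- the data for the purification
  let e : Fin (d * d) ≃ Fin d × Fin d := finProdFinEquiv.symm
  let H : Fin d → Fin d → k := fun i j => -(G i j)
  have hH : ∀ i j, H i j = H j i := fun i j => by show -(G i j) = -(G j i); rw [hGsym]
  let a : Fin (d * d) → k := fun l => A' H (e l)
  let fu : ↥P → (Fin (d * d) → k) := fun X l => F' (e l) ⇑(b.repr X)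
  have fu_key : ∀ X Y : ↥P, ∑ l, (a l * fu X l) * fu Y l
      = ∑ i, ∑ j, H i j * ((b.repr X) i * (b.repr Y) j) := by
    intro X Y
    have h1 : ∀ l, (a l * fu X l) * fu Y l
        = A' H (e l) * (F' (e l) ⇑(b.repr X) * F' (e l) ⇑(b.repr Y)) := fun l => by
      show (A' H (e l) * F' (e l) ⇑(b.repr X)) * F' (e l) ⇑(b.repr Y) = _; ring
    simp_rw [h1]
    rw [Equiv.sum_comp e (fun ij => A' H ij * (F' ij ⇑(b.repr X) * F' ij ⇑(b.repr Y)))]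
    exact key H hH _ _
  let V : Submodule k ((Fin n → k) × ((Fin m → k) × (Fin (d * d) → k))) :=
    { carrier := {t | ∃ X : ↥P, X.val.1 = t.1 ∧ X.val.2 = t.2.1 ∧ fu X = t.2.2}
      add_mem' := by
        rintro t s ⟨X, hX1, hX2, hX3⟩ ⟨Y, hY1, hY2, hY3⟩
        refine ⟨X + Y, ?_, ?_, ?_⟩
        · show (X.val + Y.val).1 = t.1 + s.1; rw [Prod.fst_add, hX1, hY1]
        · show (X.val + Y.val).2 = (t.2 + s.2).1; rw [Prod.snd_add, Prod.fst_add, hX2, hY2]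
        · show fu (X + Y) = (t.2 + s.2).2
          funext l
          show F' (e l) ⇑(b.repr (X + Y)) = _
          rw [map_add]
          have : ⇑(b.repr X + b.repr Y) = ⇑(b.repr X) + ⇑(b.repr Y) := rfl
          rw [this, F'_add]
          show fu X l + fu Y l = (t.2.2 + s.2.2) l
          rw [hX3, hY3]; rfl
      zero_mem' := by
        refine ⟨0, rfl, rfl, ?_⟩
        funext l
        show F' (e l) ⇑(b.repr 0) = (0 : Fin (d * d) → k) l
        have h0 : b.repr 0 = 0 := b.repr.toLinearMap.map_zero
        rw [h0]
        exact F'_zero (e l)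
      smul_mem' := by
        rintro c t ⟨X, hX1, hX2, hX3⟩
        refine ⟨c • X, ?_, ?_, ?_⟩
        · show (c • X.val).1 = c • t.1; rw [Prod.smul_fst, hX1]
        · show (c • X.val).2 = (c • t.2).1; rw [Prod.smul_snd, Prod.smul_fst, hX2]
        · show fu (c • X) = (c • t.2).2
          funext l
          show F' (e l) ⇑(b.repr (c • X)) = _
          rw [map_smul]
          have : ⇑(c • b.repr X) = c • ⇑(b.repr X) := rfl
          rw [this, F'_smul]
          show c * fu X l = (c • t.2.2) l
          rw [hX3]; rfl }
  have hVmem : ∀ t : (Fin n → k) × ((Fin m → k) × (Fin (d * d) → k)),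
      t ∈ V ↔ ∃ X : ↥P, X.val.1 = t.1 ∧ X.val.2 = t.2.1 ∧ fu X = t.2.2 := fun t => Iff.rfl
  refine ⟨d * d, V, a, ?_⟩
  intro p
  constructor
  · -- forward
    intro hp
    have hpP : piX k n m p ∈ P := Submodule.mem_map_of_mem hp
    set X : ↥P := ⟨piX k n m p, hpP⟩ with hX
    refine ⟨fu X, fun l => a l * fu X l, ?_, ?_, fun i => rfl⟩
    · exact (hVmem _).mpr ⟨X, rfl, rfl, rfl⟩
    · rintro q hq
      obtain ⟨Y, hY1, hY2, hY3⟩ := (hVmem q).mp hq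
      rw [← hY1, ← hY2, ← hY3]
      have hdot : dot (fun l => a l * fu X l) (fu Y) = ∑ l, (a l * fu X l) * fu Y l := rfl
      rw [hdot, fu_key X Y]
      have hbpv : bp Y.val (piZ k n m p) = ∑ i, ∑ j, G i j * ((b.repr Y) i * (b.repr X) j) := by
        rw [hbp_left Y (piZ k n m p)]
        refine Finset.sum_congr rfl fun i _ => ?_
        rw [hchar1 p hp hpP i, Finset.mul_sum]
        exact Finset.sum_congr rfl fun j _ => by ring
      have hswap : ∑ i, ∑ j, H i j * ((b.repr X) i * (b.repr Y) j)
          = ∑ i, ∑ j, H i j * ((b.repr Y) i * (b.repr X) j) := swap_sum H hH _ _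
      rw [hswap]
      have hH2G : ∑ i, ∑ j, H i j * ((b.repr Y) i * (b.repr X) j)
          = -∑ i, ∑ j, G i j * ((b.repr Y) i * (b.repr X) j) := by
        rw [← Finset.sum_neg_distrib]
        refine Finset.sum_congr rfl fun i _ => ?_
        rw [← Finset.sum_neg_distrib]
        exact Finset.sum_congr rfl fun j _ => by show -(G i j) * _ = _; ring
      rw [hH2G, ← hbpv]
      show dot p.1.2 Y.val.1 = dot p.2.2 Y.val.2 + -(bp Y.val (piZ k n m p))
      simp only [bp, piZ_apply]
      rw [dot_comm Y.val.2 p.2.2, dot_comm Y.val.1 p.1.2]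
      ring
  · -- backward
    rintro ⟨u, u', hu, horth, hu'⟩
    obtain ⟨X, hX1, hX2, hX3⟩ := (hVmem _).mp hu
    have hval : X.val = piX k n m p := by
      rw [piX_apply]
      exact Prod.ext hX1 hX2
    have hpP : piX k n m p ∈ P := hval ▸ X.2
    refine hchar2 p hpP ?_
    intro i
    have hXeq : (⟨piX k n m p, hpP⟩ : ↥P) = X := Subtype.ext hval.symm
    rw [hXeq]
    have hbi : ((b i : ↥P) : (Fin n → k) × (Fin m → k)).1
        = ((b i : ↥P) : (Fin n → k) × (Fin m → k)).1 := rfl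
    have hqV : (((b i : ↥P) : (Fin n → k) × (Fin m → k)).1,
        (((b i : ↥P) : (Fin n → k) × (Fin m → k)).2, fu (b i))) ∈ V :=
      (hVmem _).mpr ⟨b i, rfl, rfl, rfl⟩
    have h0 := horth _ hqV
    -- h0 : dot p.1.2 (b i).val.1 = dot p.2.2 (b i).val.2 + dot u' (fu (b i))
    have hu'eq : u' = fun l => a l * u l := funext hu'
    have hueq : u = fu X := hX3.symm
    have hdot : dot u' (fu (b i)) = ∑ l, (a l * fu X l) * fu (b i) l := by
      rw [hu'eq, hueq]; rfl
    rw [hdot, fu_key X (b i)] at h0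
    have hsingle : ∑ i', ∑ j', H i' j' * ((b.repr X) i' * (b.repr (b i)) j')
        = ∑ j, (b.repr X) j * (-(G j i)) := by
      refine Finset.sum_congr rfl fun i' _ => ?_
      rw [Finset.sum_eq_single i]
      · rw [b.repr_self, Finsupp.single_eq_same]
        show H i' i * ((b.repr X) i' * 1) = (b.repr X) i' * (-(G i' i)); ring
      · intro j' _ hj'
        rw [b.repr_self, Finsupp.single_eq_of_ne hj', mul_zero, mul_zero]
      · intro h; exact absurd (Finset.mem_univ i) h
    rw [hsingle] at h0
    have hgoal : bp ((b i : ↥P) : (Fin n → k) × (Fin m → k)) (piZ k n m p)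
        = dot p.2.2 ((b i : ↥P) : (Fin n → k) × (Fin m → k)).2
          - dot p.1.2 ((b i : ↥P) : (Fin n → k) × (Fin m → k)).1 := by
      simp only [bp, piZ_apply]
      rw [dot_comm ((b i : ↥P) : (Fin n → k) × (Fin m → k)).2 p.2.2,
        dot_comm ((b i : ↥P) : (Fin n → k) × (Fin m → k)).1 p.1.2]
    rw [hgoal]
    have h0' : dot p.1.2 ((b i : ↥P) : (Fin n → k) × (Fin m → k)).1
        = dot p.2.2 ((b i : ↥P) : (Fin n → k) × (Fin m → k)).2
          + ∑ j, (b.repr X) j * (-(G j i)) := h0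
    have hsum : ∑ j, (b.repr X) j * G i j = -∑ j, (b.repr X) j * (-(G j i)) := by
      rw [← Finset.sum_neg_distrib]
      exact Finset.sum_congr rfl fun j _ => by rw [hGsym i j]; ring
    rw [hsum]
    linear_combination -h0'

end Statement16
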